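/- Let G be a group containing no free subgroup on two generators, 𝔤 = (g_1,…,g_n) a finite string of elements of G and ℰ a finite partition of G. Suppose a subsystem of Eq(𝔤,ℰ) consisting of n equations is encoded by n×ℓ (0,1)-matrices V and W with ℓ = |Con(𝔤,ℰ)| = 3, satisfying ∑_{i=1}^n (W_i − V_i) = (1,1,1), and there exists an n×n permutation matrix P, associated to a permutation π, such that the first n−1 rows of PW − P⁺V have only nonnegative entries and row π(1) of V contains exactly one entry equal to 1. Then the Tarski number of G equals 5. -/

import Mathlib

namespace PaperStmt

/-- A (0,1)-matrix: every entry is 0 or 1. -/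
def ZeroOneMat {α β : Type*} (M : Matrix α β ℝ) : Prop := ∀ i j, M i j = 0 ∨ M i j = 1

/-- The lower-triangular matrix `T` with all entries on and below the diagonal equal to 1. -/
def Tmat (n : ℕ) : Matrix (Fin n) (Fin n) ℝ := fun i j => if j ≤ i then 1 else 0

/-- The permutation matrix associated to a permutation `σ` (row `i` is `e_{σ i}`). -/
def permMat {n : ℕ} (σ : Equiv.Perm (Fin n)) : Matrix (Fin n) (Fin n) ℝ :=
  fun i j => if σ i = j then 1 else 0

/-- Cyclic successor on `Fin n`. -/
def cycSucc {n : ℕ} (i : Fin n) : Fin n := ⟨(i.val + 1) % n, Nat.mod_lt _ i.pos⟩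

/-- `M⁺`: the matrix `M` with its rows cyclically shifted up by one. -/
def shiftRows {n : ℕ} {ι : Type*} (M : Matrix (Fin n) ι ℝ) : Matrix (Fin n) ι ℝ :=
  fun i j => M (cycSucc i) j

/-- The system `(B - A) X = 0` is *normal* if there is a permutation matrix `P` such that
every entry of `T P (B - A) - P⁺ A` is an integer `≥ -1`. -/
def IsNormal {n : ℕ} {ι : Type*} (A B : Matrix (Fin n) ι ℝ) : Prop :=
  ∃ σ : Equiv.Perm (Fin n), ∀ (i : Fin n) (j : ι),
    ∃ z : ℤ,
      (Tmat n * (permMat σ * (B - A)) - shiftRows (permMat σ) * A) i j = (z : ℝ) ∧ -1 ≤ z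

end PaperStmt

open Pointwise

namespace PaperStmt

/-- A group admits a paradoxical decomposition: there are pairwise disjoint subsets
`A 1, …, A p, B 1, …, B q` and group elements `s i`, `t j` such that the translates
`s i • A i` partition `G` and the translates `t j • B j` partition `G`. -/
def IsParadoxical (G : Type*) [Group G] : Prop :=
  ∃ (p q : ℕ), 0 < p ∧ 0 < q ∧
    ∃ (A : Fin p → Set G) (B : Fin q → Set G) (s : Fin p → G) (t : Fin q → G),
      (∀ i i', i ≠ i' → Disjoint (A i) (A i')) ∧
      (∀ j j', j ≠ j' → Disjoint (B j) (B j')) ∧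
      (∀ i j, Disjoint (A i) (B j)) ∧
      (⋃ i, s i • A i) = Set.univ ∧
      (∀ i i', i ≠ i' → Disjoint (s i • A i) (s i' • A i')) ∧
      (⋃ j, t j • B j) = Set.univ ∧
      (∀ j j', j ≠ j' → Disjoint (t j • B j) (t j' • B j'))

/-- A finitely additive, left-invariant probability measure defined on all subsets of `G`
(the defining property of amenability for a discrete group). -/
def HasLeftInvariantMean (G : Type*) [Group G] : Prop :=
  ∃ μ : Set G → ℝ,
    (∀ A : Set G, 0 ≤ μ A ∧ μ A ≤ 1) ∧
    μ Set.univ = 1 ∧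
    (∀ A B : Set G, Disjoint A B → μ (A ∪ B) = μ A + μ B) ∧
    (∀ (g : G) (A : Set G), μ (g • A) = μ A)

/-- A *complete* paradoxical decomposition with `p + q` pieces: the pieces
`A 1, …, A p, B 1, …, B q` form a partition of `G`, and the translates
`s i • A i` and `t j • B j` each form a partition of `G`. -/
def IsCompleteParadox (G : Type*) [Group G] (p q : ℕ) : Prop :=
  ∃ (A : Fin p → Set G) (B : Fin q → Set G) (s : Fin p → G) (t : Fin q → G),
    (∀ i i', i ≠ i' → Disjoint (A i) (A i')) ∧
    (∀ j j', j ≠ j' → Disjoint (B j) (B j')) ∧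
    (∀ i j, Disjoint (A i) (B j)) ∧
    ((⋃ i, A i) ∪ (⋃ j, B j)) = Set.univ ∧
    (⋃ i, s i • A i) = Set.univ ∧
    (∀ i i', i ≠ i' → Disjoint (s i • A i) (s i' • A i')) ∧
    (⋃ j, t j • B j) = Set.univ ∧
    (∀ j j', j ≠ j' → Disjoint (t j • B j) (t j' • B j'))

/-- The Tarski number of a group: the least total number of pieces `p + q` over all
complete paradoxical decompositions of `G`, and `∞` if there is none. -/
noncomputable def tarskiNumber (G : Type*) [Group G] : ℕ∞ :=
  sInf {N : ℕ∞ | ∃ p q : ℕ, N = ((p + q : ℕ) : ℕ∞) ∧ IsCompleteParadox G p q}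

end PaperStmt

open Pointwise

namespace PaperStmt

/-- `E : Fin m → Set G` is a partition of `G`: pairwise disjoint with union all of `G`. -/
def IsPartition {G : Type*} {m : ℕ} (E : Fin m → Set G) : Prop :=
  (∀ i j, i ≠ j → Disjoint (E i) (E j)) ∧ (⋃ i, E i) = Set.univ

/-- `C = (c_0, …, c_n)` is a configuration for the pair `(g, E)`: there is `x ∈ E (c 0)`
with `g i * x ∈ E (c i)` for `1 ≤ i ≤ n`. -/
def IsConfig {G : Type*} [Group G] {n m : ℕ} (g : Fin n → G) (E : Fin m → Set G)
    (C : Fin (n + 1) → Fin m) : Prop :=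
  ∃ x : G, x ∈ E (C 0) ∧ ∀ i : Fin n, g i * x ∈ E (C i.succ)

/-- `x_0(C) = E_{c_0} ∩ ⋂_{j=1}^n g_j⁻¹ E_{c_j}`. -/
def xzero {G : Type*} [Group G] {n m : ℕ} (g : Fin n → G) (E : Fin m → Set G)
    (C : Fin (n + 1) → Fin m) : Set G :=
  E (C 0) ∩ ⋂ i : Fin n, (g i)⁻¹ • E (C i.succ)

/-- The string `(g_0, g_1, …, g_n)` with `g_0 = e`. -/
def ghat {G : Type*} [Group G] {n : ℕ} (g : Fin n → G) : Fin (n + 1) → G := Fin.cons 1 g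

/-- `x_j(C) = g_j • x_0(C)` for `0 ≤ j ≤ n` (with `g_0 = e`). -/
def xj {G : Type*} [Group G] {n m : ℕ} (g : Fin n → G) (E : Fin m → Set G)
    (C : Fin (n + 1) → Fin m) (j : Fin (n + 1)) : Set G :=
  ghat g j • xzero g E C

/-- The real-valued indicator of a proposition. -/
noncomputable def ind (P : Prop) : ℝ :=
  letI := Classical.propDecidable P; if P then 1 else 0

/-- `f` is a solution of the system of configuration equations `Eq(g, E)`:
for all `1 ≤ i ≤ m` and `0 ≤ j, k ≤ n`,
`∑_{C : x_j(C) ⊆ E_i} f C = ∑_{C : x_k(C) ⊆ E_i} f C`. -/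
def IsEqSolution {G : Type*} [Group G] {n m : ℕ} (g : Fin n → G) (E : Fin m → Set G)
    (f : {C : Fin (n + 1) → Fin m // IsConfig g E C} → ℝ) : Prop :=
  ∀ (i : Fin m) (j k : Fin (n + 1)),
    ∑ᶠ C ∈ {C : {C : Fin (n + 1) → Fin m // IsConfig g E C} | xj g E C.1 j ⊆ E i}, f C =
    ∑ᶠ C ∈ {C : {C : Fin (n + 1) → Fin m // IsConfig g E C} | xj g E C.1 k ⊆ E i}, f C

end PaperStmt

namespace PaperStmt


lemma paradox_swap {G : Type*} [Group G] {p q : ℕ} (h : IsCompleteParadox G p q) :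
    IsCompleteParadox G q p := by
  obtain ⟨A, B, s, t, h1, h2, h3, h4, h5, h6, h7, h8⟩ := h
  exact ⟨B, A, t, s, h2, h1, fun j i => (h3 i j).symm, by rw [Set.union_comm]; exact h4,
    h7, h8, h5, h6⟩


lemma paradox_two_le {G : Type*} [Group G] {p q : ℕ} (h : IsCompleteParadox G p q) : 2 ≤ p := by
  obtain ⟨A, B, s, t, hA, hB, hAB, hcov, hsU, hsD, htU, htD⟩ := h
  by_contra hp
  push_neg at hp
  interval_cases p
  · have : (1 : G) ∈ ⋃ i : Fin 0, s i • A i := hsU ▸ Set.mem_univ 1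
    simp at this
  · have hA0 : A 0 = Set.univ := by
      apply Set.eq_univ_iff_forall.mpr
      intro x
      have hx : s 0 • x ∈ ⋃ i : Fin 1, s i • A i := hsU ▸ Set.mem_univ _
      simp only [Set.mem_iUnion] at hx
      obtain ⟨i, hi⟩ := hx
      have : i = 0 := Subsingleton.elim i 0
      rw [this] at hi
      exact Set.smul_mem_smul_set_iff.mp hi
    have hBj : ∀ j, B j = ∅ := by
      intro j
      have := hAB 0 j
      rw [hA0] at this
      exact Set.univ_disjoint.mp this
    have : (1 : G) ∈ ⋃ j, t j • B j := htU ▸ Set.mem_univ 1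
    simp only [Set.mem_iUnion] at this
    obtain ⟨j, hj⟩ := this
    rw [hBj j] at hj
    simp at hj


lemma free_of_paradox22 {G : Type*} [Group G] (hpq : IsCompleteParadox G 2 2) :
    ∃ φ : FreeGroup (Fin 2) →* G, Function.Injective φ := by
  classical
  obtain ⟨A, B, s, t, hA, hB, hAB, hcov, hsU, hsD, htU, htD⟩ := hpq
  have hU2 : ∀ (f : Fin 2 → Set G), (⋃ i, f i) = f 0 ∪ f 1 := by
    intro f; ext x; simp [Fin.exists_fin_two]
  have hsU' : s 0 • A 0 ∪ s 1 • A 1 = Set.univ := by rw [← hsU]; exact (hU2 (fun i => s i • A i)).symm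
  have htU' : t 0 • B 0 ∪ t 1 • B 1 = Set.univ := by rw [← htU]; exact (hU2 (fun j => t j • B j)).symm
  have compl_of : ∀ (S T : Set G), Disjoint S T → S ∪ T = Set.univ → T = Sᶜ := by
    intro S T hd hu
    ext x
    constructor
    · intro hx hS
      exact Set.disjoint_left.mp hd hS hx
    · intro hx
      have : x ∈ S ∪ T := hu ▸ Set.mem_univ x
      rcases this with h | h
      · exact absurd h hx
      · exact h
  have hcs : s 1 • A 1 = (s 0 • A 0)ᶜ := compl_of _ _ (hsD 0 1 (by decide)) hsU'
  have hct : t 1 • B 1 = (t 0 • B 0)ᶜ := compl_of _ _ (htD 0 1 (by decide)) htU'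
  set σg : G := (s 0)⁻¹ * s 1 with hσdef
  set τg : G := (t 0)⁻¹ * t 1 with hτdef
  have hσ : σg • A 1 = (A 0)ᶜ := by
    rw [hσdef, mul_smul, hcs, ← Set.smul_set_compl, inv_smul_smul]
  have hτ : τg • B 1 = (B 0)ᶜ := by
    rw [hτdef, mul_smul, hct, ← Set.smul_set_compl, inv_smul_smul]
  -- nonemptiness of A 0 and B 0
  have hne : ∀ (X Y : Fin 2 → Set G) (u : G), (∀ i j, Disjoint (X i) (Y j)) →
      u • X 1 = (X 0)ᶜ → (⋃ j, Y j) ≠ (∅ : Set G) → (X 0).Nonempty := by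
    intro X Y u hXY hu hYne
    rcases Set.eq_empty_or_nonempty (X 0) with h0 | h0
    · exfalso
      have hX1 : X 1 = Set.univ := by
        have : u • X 1 = Set.univ := by rw [hu, h0, Set.compl_empty]
        have h2 : u⁻¹ • (u • X 1) = u⁻¹ • (Set.univ : Set G) := by rw [this]
        rwa [inv_smul_smul, Set.smul_set_univ] at h2
      apply hYne
      ext x
      simp only [Set.mem_iUnion, Set.mem_empty_iff_false, iff_false, not_exists]
      intro j hx
      exact Set.disjoint_left.mp (hXY 1 j) (hX1 ▸ Set.mem_univ x) hx
    · exact h0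
  have hBune : (⋃ j, B j) ≠ (∅ : Set G) := by
    intro hemp
    have : (1 : G) ∈ ⋃ j, t j • B j := htU ▸ Set.mem_univ 1
    simp only [Set.mem_iUnion] at this
    obtain ⟨j, x, hx, _⟩ := this
    have : x ∈ ⋃ j, B j := Set.mem_iUnion.mpr ⟨j, hx⟩
    rw [hemp] at this
    exact this
  have hAune : (⋃ i, A i) ≠ (∅ : Set G) := by
    intro hemp
    have : (1 : G) ∈ ⋃ i, s i • A i := hsU ▸ Set.mem_univ 1
    simp only [Set.mem_iUnion] at this
    obtain ⟨i, x, hx, _⟩ := this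
    have : x ∈ ⋃ i, A i := Set.mem_iUnion.mpr ⟨i, hx⟩
    rw [hemp] at this
    exact this
  have hA0ne : (A 0).Nonempty := hne A B σg hAB hσ hBune
  have hB0ne : (B 0).Nonempty := hne B A τg (fun i j => (hAB j i).symm) hτ hAune
  -- ping pong
  set a : ULift.{_} (Fin 2) → G := fun i => if i.down = 0 then σg else τg with hadef
  set X : ULift.{_} (Fin 2) → Set G := fun i => if i.down = 0 then A 0 else B 0 with hXdef
  set Y : ULift.{_} (Fin 2) → Set G := fun i => if i.down = 0 then A 1 else B 1 with hYdef
  have hcases : ∀ i : ULift (Fin 2), i.down = 0 ∨ i.down = 1 := by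
    rintro ⟨i⟩; fin_cases i <;> simp
  have hX0 : X ⟨0⟩ = A 0 := by simp [hXdef]
  have hX1 : X ⟨1⟩ = B 0 := by simp [hXdef]
  have hY0 : Y ⟨0⟩ = A 1 := by simp [hYdef]
  have hY1 : Y ⟨1⟩ = B 1 := by simp [hYdef]
  have ha0 : a ⟨0⟩ = σg := by simp [hadef]
  have ha1 : a ⟨1⟩ = τg := by simp [hadef]
  have hdown : ∀ i : ULift (Fin 2), ∀ c, i.down = c → i = ⟨c⟩ := by
    rintro ⟨i⟩ c h; simp only at h; rw [h]
  have hinj : Function.Injective (FreeGroup.lift a) := by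
    apply FreeGroup.injective_lift_of_ping_pong a X Y
    · intro i
      rcases hcases i with hi | hi <;> rw [hdown i _ hi]
      · rw [hX0]; exact hA0ne
      · rw [hX1]; exact hB0ne
    · intro i j hij
      rcases hcases i with hi | hi <;> rcases hcases j with hj | hj <;>
        rw [hdown i _ hi] at hij ⊢ <;> rw [hdown j _ hj] at hij ⊢
      · exact absurd rfl hij
      · show Disjoint (X ⟨0⟩) (X ⟨1⟩); rw [hX0, hX1]; exact hAB 0 0
      · show Disjoint (X ⟨1⟩) (X ⟨0⟩); rw [hX0, hX1]; exact (hAB 0 0).symm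
      · exact absurd rfl hij
    · intro i j hij
      rcases hcases i with hi | hi <;> rcases hcases j with hj | hj <;>
        rw [hdown i _ hi] at hij ⊢ <;> rw [hdown j _ hj] at hij ⊢
      · exact absurd rfl hij
      · show Disjoint (Y ⟨0⟩) (Y ⟨1⟩); rw [hY0, hY1]; exact hAB 1 1
      · show Disjoint (Y ⟨1⟩) (Y ⟨0⟩); rw [hY0, hY1]; exact (hAB 1 1).symm
      · exact absurd rfl hij
    · intro i j
      rcases hcases i with hi | hi <;> rcases hcases j with hj | hj <;>
        rw [hdown i _ hi, hdown j _ hj]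
      · rw [hX0, hY0]; exact hA 0 1 (by decide)
      · rw [hX0, hY1]; exact hAB 0 1
      · rw [hX1, hY0]; exact (hAB 1 0).symm
      · rw [hX1, hY1]; exact hB 0 1 (by decide)
    · intro i
      rcases hcases i with hi | hi <;> rw [hdown i _ hi]
      · rw [hX0, hY0, ha0, Set.smul_set_compl, hσ, compl_compl]
      · rw [hX1, hY1, ha1, Set.smul_set_compl, hτ, compl_compl]
    · intro i
      rcases hcases i with hi | hi <;> rw [hdown i _ hi] <;> rw [Pi.inv_apply]
      · rw [hX0, hY0, ha0, ← hσ, inv_smul_smul]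
      · rw [hX1, hY1, ha1, ← hτ, inv_smul_smul]
  refine ⟨(FreeGroup.lift a).comp (FreeGroup.freeGroupCongr Equiv.ulift.symm).toMonoidHom, ?_⟩
  rw [MonoidHom.coe_comp, MulEquiv.coe_toMonoidHom]
  exact hinj.comp (FreeGroup.freeGroupCongr Equiv.ulift.symm).injective


section Geometry

variable {G : Type*} [Group G] {n m : ℕ} (g : Fin n → G) (E : Fin m → Set G)

lemma ghat_zero : ghat g 0 = 1 := rfl

lemma ghat_succ (i : Fin n) : ghat g i.succ = g i := by simp [ghat]

lemma mem_xzero_iff {C : Fin (n+1) → Fin m} {x : G} :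
    x ∈ xzero g E C ↔ x ∈ E (C 0) ∧ ∀ i : Fin n, g i * x ∈ E (C i.succ) := by
  unfold xzero
  simp only [Set.mem_inter_iff, Set.mem_iInter, Set.mem_inv_smul_set_iff, smul_eq_mul]

lemma xzero_nonempty (C : {C : Fin (n + 1) → Fin m // IsConfig g E C}) :
    (xzero g E C.1).Nonempty := by
  obtain ⟨x, hx⟩ := C.2
  exact ⟨x, (mem_xzero_iff g E).mpr hx⟩

lemma config_eq (hE : IsPartition E) {C C' : {C : Fin (n + 1) → Fin m // IsConfig g E C}} {x : G}
    (hx : x ∈ xzero g E C.1) (hx' : x ∈ xzero g E C'.1) : C = C' := by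
  rw [mem_xzero_iff] at hx hx'
  apply Subtype.ext
  funext j
  refine Fin.cases ?_ ?_ j
  · by_contra hne
    exact Set.disjoint_left.mp (hE.1 _ _ hne) hx.1 hx'.1
  · intro i
    by_contra hne
    exact Set.disjoint_left.mp (hE.1 _ _ hne) (hx.2 i) (hx'.2 i)

lemma xj_subset (C : {C : Fin (n + 1) → Fin m // IsConfig g E C}) (j : Fin (n+1)) :
    xj g E C.1 j ⊆ E (C.1 j) := by
  refine Fin.cases ?_ ?_ j
  · unfold xj
    rw [ghat_zero, one_smul]
    exact fun x hx => ((mem_xzero_iff g E).mp hx).1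
  · intro i
    unfold xj
    rw [ghat_succ]
    rintro y ⟨x, hx, rfl⟩
    simpa [smul_eq_mul] using ((mem_xzero_iff g E).mp hx).2 i

lemma exists_mem_xzero (hE : IsPartition E) (x : G) :
    ∃ C : {C : Fin (n + 1) → Fin m // IsConfig g E C}, x ∈ xzero g E C.1 := by
  have hex : ∀ y : G, ∃ i, y ∈ E i := by
    intro y
    have : y ∈ ⋃ i, E i := hE.2 ▸ Set.mem_univ y
    simpa [Set.mem_iUnion] using this
  choose idx hidx using hex
  refine ⟨⟨fun j => Fin.cases (idx x) (fun i => idx (g i * x)) j, ⟨x, ?_, ?_⟩⟩, ?_⟩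
  · simpa using hidx x
  · intro i
    simpa using hidx (g i * x)
  · rw [mem_xzero_iff]
    constructor
    · simpa using hidx x
    · intro i
      simpa using hidx (g i * x)

lemma xj_subset_iff (hE : IsPartition E) (C : {C : Fin (n + 1) → Fin m // IsConfig g E C})
    (j : Fin (n+1)) (i : Fin m) : xj g E C.1 j ⊆ E i ↔ C.1 j = i := by
  constructor
  · intro hs
    obtain ⟨x, hx⟩ := xzero_nonempty g E C
    have hmem : ghat g j • x ∈ xj g E C.1 j := Set.smul_mem_smul_set hx
    by_contra hne
    exact Set.disjoint_left.mp (hE.1 _ _ hne) (xj_subset g E C j hmem) (hs hmem)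
  · rintro rfl
    exact xj_subset g E C j

lemma E_eq_iUnion (hE : IsPartition E) (j : Fin (n+1)) (i : Fin m) :
    E i = ⋃ C : {C : Fin (n + 1) → Fin m // IsConfig g E C},
      ⋃ (_ : C.1 j = i), ghat g j • xzero g E C.1 := by
  ext x
  simp only [Set.mem_iUnion]
  constructor
  · intro hx
    obtain ⟨C, hC⟩ := exists_mem_xzero g E hE ((ghat g j)⁻¹ * x)
    have hxj : x ∈ xj g E C.1 j := by
      unfold xj
      rw [Set.mem_smul_set_iff_inv_smul_mem, smul_eq_mul]
      exact hC
    have hCj : C.1 j = i := by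
      by_contra hne
      exact Set.disjoint_left.mp (hE.1 _ _ hne) (xj_subset g E C j hxj) hx
    exact ⟨C, hCj, hxj⟩
  · rintro ⟨C, rfl, hx⟩
    exact xj_subset g E C j hx

end Geometry

lemma paradox_of_system {G : Type*} [Group G] {κ : Type*} [Fintype κ]
    (cell : κ → Set G)
    (hdisj : ∀ C C' : κ, C ≠ C' → Disjoint (cell C) (cell C'))
    (hcov : (⋃ C, cell C) = Set.univ)
    {n : ℕ} (hn : 0 < n) (w v : Fin n → κ → Prop) (h : Fin n → G)
    (H1 : ∀ i, (⋃ C, ⋃ (_ : w i C), cell C) = h i • ⋃ C, ⋃ (_ : v i C), cell C)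
    (H2 : ∀ (i : Fin n) (C : κ) (hi : (i : ℕ) + 1 < n), v ⟨(i : ℕ) + 1, hi⟩ C → w i C)
    (H3 : ∀ C, Nat.card {i : Fin n // w i C} = Nat.card {i : Fin n // v i C} + 1)
    (C₀ : κ) (H4 : ∀ C, v ⟨0, hn⟩ C ↔ C = C₀)
    (Hκ : Fintype.card κ = 3) :
    IsCompleteParadox G 3 2 := by
  classical
  set hf : ℕ → G := fun k => if hk : k < n then h ⟨k, hk⟩ else 1 with hhf
  set P : ℕ → G := fun k => Nat.rec (motive := fun _ => G) 1 (fun k' Pk => hf k' * Pk) k with hPdef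
  have hP0 : P 0 = 1 := rfl
  have hPs : ∀ k, P (k + 1) = hf k * P k := fun k => rfl
  set ex : Fin n → κ → Prop :=
    fun i C => w i C ∧ ∀ hi : (i : ℕ) + 1 < n, ¬ v ⟨(i : ℕ) + 1, hi⟩ C with hexd
  set Zk : ℕ → Set G :=
    fun k => if hk : k < n then ⋃ C, ⋃ (_ : v ⟨k, hk⟩ C), cell C else ∅ with hZkd
  set Tok : ℕ → Fin n → κ → G → Prop :=
    fun k i C x => ex i C ∧ k ≤ (i : ℕ) ∧ x ∈ (P k * (P ((i : ℕ) + 1))⁻¹) • cell C with hTokd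
  have cellUniq : ∀ {x : G} {C C' : κ}, x ∈ cell C → x ∈ cell C' → C = C' := by
    intro x C C' h1 h2
    by_contra hne
    exact Set.disjoint_left.mp (hdisj _ _ hne) h1 h2
  have memU : ∀ (p : κ → Prop) (x : G), (x ∈ ⋃ C, ⋃ (_ : p C), cell C) ↔ ∃ C, p C ∧ x ∈ cell C := by
    intro p x
    simp [Set.mem_iUnion]
  have KEY : ∀ d k, k + d = n →
      (∀ x, x ∈ Zk k ↔ ∃ i C, Tok k i C x) ∧
      (∀ x i C i' C', Tok k i C x → Tok k i' C' x → i = i' ∧ C = C') := by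
    intro d
    induction d with
    | zero =>
      intro k hkn
      have hk' : k = n := by omega
      subst hk'
      constructor
      · intro x
        rw [hZkd]
        simp only
        rw [dif_neg (lt_irrefl k)]
        simp only [Set.mem_empty_iff_false, false_iff]
        rintro ⟨i, C, ⟨_, hle, _⟩⟩
        exact absurd (lt_of_le_of_lt hle i.isLt) (lt_irrefl k)
      · rintro x i C i' C' ⟨_, hle, _⟩ _
        exact absurd (lt_of_le_of_lt hle i.isLt) (lt_irrefl k)
    | succ d IH =>
      intro k hkd
      have hk : k < n := by omega
      have IH' := IH (k + 1) (by omega)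
      set ik : Fin n := ⟨k, hk⟩ with hikd
      have hfk : hf k = h ik := by rw [hhf]; simp only; rw [dif_pos hk]
      have hzk : Zk k = ⋃ C, ⋃ (_ : v ik C), cell C := by
        rw [hZkd]; simp only; rw [dif_pos hk]
      have M1 : ∀ x, x ∈ Zk k ↔ ∃ C, w ik C ∧ h ik • x ∈ cell C := by
        intro x
        have hy : (⋃ C, ⋃ (_ : w ik C), cell C) = h ik • Zk k := by rw [hzk]; exact H1 ik
        constructor
        · intro hx
          have hx2 : h ik • x ∈ h ik • Zk k := Set.smul_mem_smul_set hx
          rw [← hy] at hx2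
          exact (memU _ _).mp hx2
        · intro hx
          have hx2 : h ik • x ∈ (⋃ C, ⋃ (_ : w ik C), cell C) := (memU _ _).mpr hx
          rw [hy] at hx2
          exact Set.smul_mem_smul_set_iff.mp hx2
      have M2 : ∀ y, y ∈ Zk (k + 1) ↔ ∃ C, (∃ hk1 : k + 1 < n, v ⟨k + 1, hk1⟩ C) ∧ y ∈ cell C := by
        intro y
        by_cases hk1 : k + 1 < n
        · have hz : Zk (k + 1) = ⋃ C, ⋃ (_ : v ⟨k + 1, hk1⟩ C), cell C := by
            rw [hZkd]; simp only; rw [dif_pos hk1]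
          rw [hz, memU]
          constructor
          · rintro ⟨C, hv, hy⟩
            exact ⟨C, ⟨hk1, hv⟩, hy⟩
          · rintro ⟨C, ⟨_, hv⟩, hy⟩
            exact ⟨C, hv, hy⟩
        · have hz : Zk (k + 1) = ∅ := by rw [hZkd]; simp only; rw [dif_neg hk1]
          rw [hz]
          simp only [Set.mem_empty_iff_false, false_iff]
          rintro ⟨C, ⟨hk1', _⟩, _⟩
          exact hk1 hk1'
      have SPLIT : ∀ C, w ik C ↔ ((∃ hk1 : k + 1 < n, v ⟨k + 1, hk1⟩ C) ∨ ex ik C) := by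
        intro C
        constructor
        · intro hw
          by_cases hv : ∃ hk1 : k + 1 < n, v ⟨k + 1, hk1⟩ C
          · exact Or.inl hv
          · exact Or.inr ⟨hw, fun hi hvi => hv ⟨hi, hvi⟩⟩
        · rintro (⟨hk1, hv⟩ | hex)
          · exact H2 ik C hk1 hv
          · exact hex.1
      have TOKk : ∀ x C, Tok k ik C x ↔ (ex ik C ∧ h ik • x ∈ cell C) := by
        intro x C
        have hco : P k * (P (k + 1))⁻¹ = (h ik)⁻¹ := by
          rw [hPs k, hfk]; group
        rw [hTokd]
        simp only
        rw [hco]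
        constructor
        · rintro ⟨he, _, hmem⟩
          exact ⟨he, Set.mem_inv_smul_set_iff.mp hmem⟩
        · rintro ⟨he, hmem⟩
          exact ⟨he, le_refl _, Set.mem_inv_smul_set_iff.mpr hmem⟩
      have TOKhi : ∀ (x : G) (i : Fin n) (C : κ), k + 1 ≤ (i : ℕ) →
          (Tok (k + 1) i C (h ik • x) ↔ Tok k i C x) := by
        intro x i C hki
        have hmm : (P (k + 1) * (P ((i : ℕ) + 1))⁻¹) = h ik * (P k * (P ((i : ℕ) + 1))⁻¹) := by
          rw [hPs k, hfk]; group
        rw [hTokd]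
        simp only
        rw [hmm, mul_smul]
        constructor
        · rintro ⟨he, _, hmem⟩
          exact ⟨he, by omega, Set.smul_mem_smul_set_iff.mp hmem⟩
        · rintro ⟨he, _, hmem⟩
          exact ⟨he, by omega, Set.smul_mem_smul_set hmem⟩
      constructor
      · intro x
        constructor
        · intro hx
          obtain ⟨C, hw, hmem⟩ := (M1 x).mp hx
          rcases (SPLIT C).mp hw with hnext | hex
          · have hz : h ik • x ∈ Zk (k + 1) := (M2 _).mpr ⟨C, hnext, hmem⟩
            obtain ⟨i, C', htok⟩ := (IH'.1 _).mp hz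
            exact ⟨i, C', (TOKhi x i C' htok.2.1).mp htok⟩
          · exact ⟨ik, C, (TOKk x C).mpr ⟨hex, hmem⟩⟩
        · rintro ⟨i, C, htok⟩
          by_cases hik : (i : ℕ) = k
          · have hie : i = ik := Fin.ext hik
            rw [hie] at htok
            obtain ⟨hex, hmem⟩ := (TOKk x C).mp htok
            exact (M1 x).mpr ⟨C, (SPLIT C).mpr (Or.inr hex), hmem⟩
          · have hki1 : k + 1 ≤ (i : ℕ) := by
              have := htok.2.1; omega
            have htok' := (TOKhi x i C hki1).mpr htok
            have hz : h ik • x ∈ Zk (k + 1) := (IH'.1 _).mpr ⟨i, C, htok'⟩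
            obtain ⟨C', hnext, hmem⟩ := (M2 _).mp hz
            exact (M1 x).mpr ⟨C', (SPLIT C').mpr (Or.inl hnext), hmem⟩
      · intro x i C i' C' ht ht'
        by_cases hik : (i : ℕ) = k <;> by_cases hik' : (i' : ℕ) = k
        · have hie : i = ik := Fin.ext hik
          have hie' : i' = ik := Fin.ext hik'
          rw [hie] at ht
          rw [hie'] at ht'
          exact ⟨hie.trans hie'.symm,
            cellUniq ((TOKk x C).mp ht).2 ((TOKk x C').mp ht').2⟩
        · exfalso
          have hie : i = ik := Fin.ext hik
          rw [hie] at ht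
          obtain ⟨hexC, hm⟩ := (TOKk x C).mp ht
          have hki1' : k + 1 ≤ (i' : ℕ) := by have := ht'.2.1; omega
          have htok' := (TOKhi x i' C' hki1').mpr ht'
          have hz : h ik • x ∈ Zk (k + 1) := (IH'.1 _).mpr ⟨i', C', htok'⟩
          obtain ⟨C'', ⟨hk1, hv⟩, hm''⟩ := (M2 _).mp hz
          exact hexC.2 hk1 ((cellUniq hm hm'') ▸ hv)
        · exfalso
          have hie' : i' = ik := Fin.ext hik'
          rw [hie'] at ht'
          obtain ⟨hexC', hm'⟩ := (TOKk x C').mp ht'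
          have hki1 : k + 1 ≤ (i : ℕ) := by have := ht.2.1; omega
          have htok := (TOKhi x i C hki1).mpr ht
          have hz : h ik • x ∈ Zk (k + 1) := (IH'.1 _).mpr ⟨i, C, htok⟩
          obtain ⟨C'', ⟨hk1, hv⟩, hm''⟩ := (M2 _).mp hz
          exact hexC'.2 hk1 ((cellUniq hm' hm'') ▸ hv)
        · have hki1 : k + 1 ≤ (i : ℕ) := by have := ht.2.1; omega
          have hki1' : k + 1 ≤ (i' : ℕ) := by have := ht'.2.1; omega
          exact IH'.2 (h ik • x) i C i' C'
            ((TOKhi x i C hki1).mpr ht) ((TOKhi x i' C' hki1').mpr ht')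
  have KEY0 := KEY n 0 (by omega)
  have hZ0 : Zk 0 = cell C₀ := by
    rw [hZkd]
    simp only
    rw [dif_pos hn]
    ext x
    rw [memU]
    constructor
    · rintro ⟨C, hv, hx⟩
      exact ((H4 C).mp hv) ▸ hx
    · intro hx
      exact ⟨C₀, (H4 C₀).mpr rfl, hx⟩
  -- counting the exit tokens of each cell
  have cardEc : ∀ C : κ, (Finset.univ.filter (fun i => ex i C)).card = if C = C₀ then 2 else 1 := by
    intro C
    set Wc := Finset.univ.filter (fun i => w i C) with hWcd
    set Vc := Finset.univ.filter (fun i => v i C) with hVcd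
    set Ec := Finset.univ.filter (fun i => ex i C) with hEcd
    set Rc := Finset.univ.filter
      (fun i : Fin n => ∃ hi : (i : ℕ) + 1 < n, v ⟨(i : ℕ) + 1, hi⟩ C) with hRcd
    set Vc' := Finset.univ.filter (fun t : Fin n => 0 < (t : ℕ) ∧ v t C) with hVc'd
    have hWV : Wc.card = Vc.card + 1 := by
      have h3 := H3 C
      rwa [Nat.card_eq_fintype_card, Nat.card_eq_fintype_card,
        Fintype.card_subtype, Fintype.card_subtype] at h3
    have hsplit : Wc = Ec ∪ Rc := by
      ext i
      simp only [hWcd, hEcd, hRcd, Finset.mem_union, Finset.mem_filter, Finset.mem_univ, true_and]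
      constructor
      · intro hw
        by_cases hv : ∃ hi : (i : ℕ) + 1 < n, v ⟨(i : ℕ) + 1, hi⟩ C
        · exact Or.inr hv
        · exact Or.inl ⟨hw, fun hi hvi => hv ⟨hi, hvi⟩⟩
      · rintro (hex | ⟨hi, hv⟩)
        · exact hex.1
        · exact H2 i C hi hv
    have hdisj2 : Disjoint Ec Rc := by
      rw [Finset.disjoint_left]
      rintro i hi hir
      simp only [hEcd, hRcd, Finset.mem_filter, Finset.mem_univ, true_and] at hi hir
      obtain ⟨hlt, hv⟩ := hir
      exact hi.2 hlt hv
    have hcardW : Wc.card = Ec.card + Rc.card := by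
      rw [hsplit, Finset.card_union_of_disjoint hdisj2]
    have hRV : Rc.card = Vc'.card := by
      apply Finset.card_bij
        (fun (i : Fin n) (_ : i ∈ Rc) => if hi : (i : ℕ) + 1 < n then (⟨(i : ℕ) + 1, hi⟩ : Fin n) else i)
      · intro i hi
        simp only [hRcd, Finset.mem_filter, Finset.mem_univ, true_and] at hi
        obtain ⟨hlt, hv⟩ := hi
        rw [dif_pos hlt]
        simp only [hVc'd, Finset.mem_filter, Finset.mem_univ, true_and]
        exact ⟨by omega, hv⟩
      · intro i hi i' hi' heq
        simp only [hRcd, Finset.mem_filter, Finset.mem_univ, true_and] at hi hi'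
        obtain ⟨hlt, _⟩ := hi
        obtain ⟨hlt', _⟩ := hi'
        rw [dif_pos hlt, dif_pos hlt', Fin.mk.injEq] at heq
        exact Fin.ext (by omega)
      · intro t ht
        simp only [hVc'd, Finset.mem_filter, Finset.mem_univ, true_and] at ht
        obtain ⟨hpos, hv⟩ := ht
        have hlt : ((t : ℕ) - 1) + 1 < n := by omega
        refine ⟨⟨(t : ℕ) - 1, by omega⟩, ?_, ?_⟩
        · simp only [hRcd, Finset.mem_filter, Finset.mem_univ, true_and]
          refine ⟨hlt, ?_⟩
          have he : (⟨((t : ℕ) - 1) + 1, hlt⟩ : Fin n) = t :=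
            Fin.ext (show ((t : ℕ) - 1) + 1 = (t : ℕ) by omega)
          rwa [he]
        · rw [dif_pos hlt]
          exact Fin.ext (show ((t : ℕ) - 1) + 1 = (t : ℕ) by omega)
    have hVV : Vc.card = Vc'.card + (if C = C₀ then 1 else 0) := by
      by_cases hC : C = C₀
      · rw [if_pos hC]
        have h0 : (⟨0, hn⟩ : Fin n) ∈ Vc := by
          simp only [hVcd, Finset.mem_filter, Finset.mem_univ, true_and]
          exact (H4 C).mpr hC
        have hVe : Vc' = Vc.erase ⟨0, hn⟩ := by
          apply Finset.ext
          intro t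
          constructor
          · intro ht
            obtain ⟨hpos, hv⟩ := (Finset.mem_filter.mp ht).2
            apply Finset.mem_erase.mpr
            refine ⟨?_, Finset.mem_filter.mpr ⟨Finset.mem_univ _, hv⟩⟩
            intro he
            rw [he] at hpos
            simp at hpos
          · intro ht
            obtain ⟨hne, ht2⟩ := Finset.mem_erase.mp ht
            have hv := (Finset.mem_filter.mp ht2).2
            apply Finset.mem_filter.mpr
            refine ⟨Finset.mem_univ _, ?_, hv⟩
            rcases Nat.eq_zero_or_pos (t : ℕ) with h0' | h0'
            · exact absurd (Fin.ext h0') hne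
            · exact h0'
        have hpos : 1 ≤ Vc.card := Finset.card_pos.mpr ⟨_, h0⟩
        rw [hVe, Finset.card_erase_of_mem h0]
        omega
      · rw [if_neg hC, add_zero]
        congr 1
        apply Finset.ext
        intro t
        constructor
        · intro ht
          have hv := (Finset.mem_filter.mp ht).2
          apply Finset.mem_filter.mpr
          refine ⟨Finset.mem_univ _, ?_, hv⟩
          rcases Nat.eq_zero_or_pos (t : ℕ) with h0' | h0'
          · exfalso
            have ht0 : t = ⟨0, hn⟩ := Fin.ext h0'
            rw [ht0] at hv
            exact hC ((H4 C).mp hv)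
          · exact h0'
        · intro ht
          exact Finset.mem_filter.mpr ⟨Finset.mem_univ _, (Finset.mem_filter.mp ht).2.2⟩
    by_cases hC : C = C₀
    · rw [if_pos hC]
      rw [if_pos hC] at hVV
      omega
    · rw [if_neg hC]
      rw [if_neg hC] at hVV
      omega
  -- select the tokens
  have hEc0 : (Finset.univ.filter (fun i => ex i C₀)).card = 2 := by rw [cardEc]; simp
  obtain ⟨i1, i2, hi12, hE0⟩ := Finset.card_eq_two.mp hEc0
  have hselx : ∀ C : κ, C ≠ C₀ → ∃ i, Finset.univ.filter (fun i => ex i C) = {i} := by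
    intro C hC
    apply Finset.card_eq_one.mp
    rw [cardEc]
    simp [hC]
  choose sel hselspec using hselx
  set pc : κ → Fin n := fun C => if hC : C = C₀ then i2 else sel C hC with hpcd
  have hpc_mem : ∀ C, ex (pc C) C := by
    intro C
    by_cases hC : C = C₀
    · rw [hpcd]
      simp only [dif_pos hC]
      have hmem : i2 ∈ Finset.univ.filter (fun i => ex i C) := by
        rw [hC, hE0]; simp
      simpa using (Finset.mem_filter.mp hmem).2
    · rw [hpcd]
      simp only [dif_neg hC]
      have hmem : sel C hC ∈ Finset.univ.filter (fun i => ex i C) := by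
        rw [hselspec C hC]; simp
      simpa using (Finset.mem_filter.mp hmem).2
  have hi1_mem : ex i1 C₀ := by
    have hmem : i1 ∈ Finset.univ.filter (fun i => ex i C₀) := by rw [hE0]; simp
    simpa using (Finset.mem_filter.mp hmem).2
  have hpcC₀ : pc C₀ = i2 := by rw [hpcd]; simp
  have htok_char : ∀ (i : Fin n) (C : κ), ex i C → (i = pc C ∨ (C = C₀ ∧ i = i1)) := by
    intro i C hex
    have hiE : i ∈ Finset.univ.filter (fun i => ex i C) := by
      simp only [Finset.mem_filter, Finset.mem_univ, true_and]; exact hex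
    by_cases hC : C = C₀
    · subst hC
      rw [hE0] at hiE
      simp only [Finset.mem_insert, Finset.mem_singleton] at hiE
      rcases hiE with h | h
      · exact Or.inr ⟨rfl, h⟩
      · exact Or.inl (by rw [hpcC₀]; exact h)
    · rw [hselspec C hC] at hiE
      simp only [Finset.mem_singleton] at hiE
      exact Or.inl (by rw [hpcd]; simp only [dif_neg hC]; exact hiE)
  -- pieces at k = 0
  have hTok0mem : ∀ (i : Fin n) (C : κ) (x : G),
      Tok 0 i C x ↔ (ex i C ∧ x ∈ ((P ((i : ℕ) + 1))⁻¹) • cell C) := by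
    intro i C x
    rw [hTokd]
    simp only
    rw [hP0, one_mul]
    constructor
    · rintro ⟨he, _, hm⟩
      exact ⟨he, hm⟩
    · rintro ⟨he, hm⟩
      exact ⟨he, Nat.zero_le _, hm⟩
  have hpart : ∀ x, x ∈ cell C₀ ↔ ∃ i C, Tok 0 i C x := by
    intro x
    rw [← hZ0]
    exact KEY0.1 x
  have huniq := KEY0.2
  have hdisjTok : ∀ (i : Fin n) (C : κ) (i' : Fin n) (C' : κ), ex i C → ex i' C' →
      (i ≠ i' ∨ C ≠ C') →
      Disjoint (((P ((i : ℕ) + 1))⁻¹) • cell C) (((P ((i' : ℕ) + 1))⁻¹) • cell C') := by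
    intro i C i' C' he he' hne
    rw [Set.disjoint_left]
    intro x hx hx'
    have h1 : Tok 0 i C x := (hTok0mem _ _ _).mpr ⟨he, hx⟩
    have h2 : Tok 0 i' C' x := (hTok0mem _ _ _).mpr ⟨he', hx'⟩
    obtain ⟨hii, hCC⟩ := huniq x i C i' C' h1 h2
    rcases hne with h | h
    · exact h hii
    · exact h hCC
  have hAsub : ∀ C : κ, ((P (((pc C) : ℕ) + 1))⁻¹) • cell C ⊆ cell C₀ := by
    intro C x hx
    exact (hpart x).mpr ⟨pc C, C, (hTok0mem _ _ _).mpr ⟨hpc_mem C, hx⟩⟩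
  have hB0sub : ((P ((i1 : ℕ) + 1))⁻¹) • cell C₀ ⊆ cell C₀ := by
    intro x hx
    exact (hpart x).mpr ⟨i1, C₀, (hTok0mem _ _ _).mpr ⟨hi1_mem, hx⟩⟩
  -- assemble the decomposition
  let e : Fin 3 ≃ κ := (Fintype.equivFinOfCardEq Hκ).symm
  refine ⟨fun j => ((P (((pc (e j)) : ℕ) + 1))⁻¹) • cell (e j),
    ![((P ((i1 : ℕ) + 1))⁻¹) • cell C₀, (cell C₀)ᶜ],
    fun j => P (((pc (e j)) : ℕ) + 1),
    ![P ((i1 : ℕ) + 1), 1], ?_, ?_, ?_, ?_, ?_, ?_, ?_, ?_⟩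
  · intro j j' hne
    exact hdisjTok _ _ _ _ (hpc_mem _) (hpc_mem _)
      (Or.inr (fun hEq => hne (e.injective hEq)))
  · intro j j' hne
    fin_cases j <;> fin_cases j' <;>
      simp only [Fin.zero_eta, Fin.mk_one, Matrix.cons_val_zero, Matrix.cons_val_one, Matrix.head_cons]
    · exact absurd rfl hne
    · exact (disjoint_compl_right).mono_left hB0sub
    · exact ((disjoint_compl_right).mono_left hB0sub).symm
    · exact absurd rfl hne
  · intro j j'
    fin_cases j' <;> simp only [Fin.zero_eta, Fin.mk_one, Matrix.cons_val_zero, Matrix.cons_val_one, Matrix.head_cons]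
    · apply hdisjTok _ _ _ _ (hpc_mem _) hi1_mem
      by_cases hC : e j = C₀
      · refine Or.inl ?_
        rw [hC, hpcC₀]
        exact hi12.symm
      · exact Or.inr hC
    · exact (disjoint_compl_right).mono_left (hAsub (e j))
  · apply Set.eq_univ_iff_forall.mpr
    intro x
    by_cases hx : x ∈ cell C₀
    · obtain ⟨i, C, htok⟩ := (hpart x).mp hx
      obtain ⟨hex, hmem⟩ := (hTok0mem _ _ _).mp htok
      rcases htok_char i C hex with hipc | ⟨hC, hi⟩
      · apply Set.mem_union_left
        apply Set.mem_iUnion.mpr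
        refine ⟨e.symm C, ?_⟩
        rw [e.apply_symm_apply]
        rw [hipc] at hmem
        exact hmem
      · apply Set.mem_union_right
        apply Set.mem_iUnion.mpr
        refine ⟨0, ?_⟩
        simp only [Matrix.cons_val_zero]
        rw [hC] at hmem
        rw [hi] at hmem
        exact hmem
    · apply Set.mem_union_right
      apply Set.mem_iUnion.mpr
      exact ⟨1, hx⟩
  · apply Set.eq_univ_iff_forall.mpr
    intro x
    have hx : x ∈ ⋃ C, cell C := hcov ▸ Set.mem_univ x
    obtain ⟨C, hC⟩ := Set.mem_iUnion.mp hx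
    apply Set.mem_iUnion.mpr
    refine ⟨e.symm C, ?_⟩
    rw [smul_inv_smul, e.apply_symm_apply]
    exact hC
  · intro j j' hne
    rw [smul_inv_smul, smul_inv_smul]
    exact hdisj _ _ (fun hEq => hne (e.injective hEq))
  · apply Set.eq_univ_iff_forall.mpr
    intro x
    by_cases hx : x ∈ cell C₀
    · apply Set.mem_iUnion.mpr
      refine ⟨0, ?_⟩
      simp only [Matrix.cons_val_zero]
      rw [smul_inv_smul]
      exact hx
    · apply Set.mem_iUnion.mpr
      refine ⟨1, ?_⟩
      simp only [Matrix.cons_val_one, Matrix.head_cons]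
      simp only [Matrix.cons_val_zero, one_smul]
      exact hx
  · intro j j' hne
    fin_cases j <;> fin_cases j' <;>
      simp only [Fin.zero_eta, Fin.mk_one, Matrix.cons_val_zero, Matrix.cons_val_one, Matrix.head_cons]
    · exact absurd rfl hne
    · rw [smul_inv_smul, one_smul]
      exact disjoint_compl_right
    · rw [smul_inv_smul, one_smul]
      exact disjoint_compl_right.symm
    · exact absurd rfl hne


/-- Suppose `G` contains no free subgroup on two generators, and a subsystem of `Eq(g, E)` of
`n` equations is encoded by `n × ℓ` (0,1)-matrices `V`, `W` with `ℓ = |Con(g, E)| = 3`,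
`∑_i (W_i - V_i) = (1, 1, 1)`, and there is a permutation matrix `P` (associated to `σ`) such
that the first `n - 1` rows of `P W - P⁺ V` are nonnegative and row `σ(1)` of `V` contains
exactly one entry equal to `1`. Then `τ(G) = 5`. -/
theorem tarski_eq_five {G : Type*} [Group G] {n m : ℕ} (hn : 0 < n)
    (hfree : ¬∃ φ : FreeGroup (Fin 2) →* G, Function.Injective φ)
    (g : Fin n → G) (E : Fin m → Set G) (hE : IsPartition E)
    (iT : Fin n → Fin m) (jT kT : Fin n → Fin (n + 1))
    (V W : Matrix (Fin n) {C : Fin (n + 1) → Fin m // IsConfig g E C} ℝ)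
    (hV : ∀ t C, V t C = ind (xj g E C.1 (kT t) ⊆ E (iT t)))
    (hW : ∀ t C, W t C = ind (xj g E C.1 (jT t) ⊆ E (iT t)))
    (hcard : Nat.card {C : Fin (n + 1) → Fin m // IsConfig g E C} = 3)
    (hsum : ∀ C, ∑ i, (W i C - V i C) = 1)
    (σ : Equiv.Perm (Fin n))
    (hrows : ∀ i : Fin n, i.val + 1 < n → ∀ C,
      0 ≤ (permMat σ * W - shiftRows (permMat σ) * V) i C)
    (hrow1 : Nat.card
      {C : {C : Fin (n + 1) → Fin m // IsConfig g E C} // V (σ ⟨0, hn⟩) C = 1} = 1) :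
    tarskiNumber G = (5 : ℕ∞) := by
  classical
  have hfin : Finite {C : Fin (n + 1) → Fin m // IsConfig g E C} :=
    Nat.finite_of_card_ne_zero (by rw [hcard]; omega)
  haveI := hfin
  haveI := Fintype.ofFinite {C : Fin (n + 1) → Fin m // IsConfig g E C}
  have hcard3 : Fintype.card {C : Fin (n + 1) → Fin m // IsConfig g E C} = 3 := by
    rw [← Nat.card_eq_fintype_card]
    exact hcard
  have ind_eq_one : ∀ {P : Prop}, P → ind P = 1 := by
    intro P hP
    unfold ind
    simp [hP]
  have ind_eq_zero : ∀ {P : Prop}, ¬ P → ind P = 0 := by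
    intro P hP
    unfold ind
    simp [hP]
  have prop_of_ind_eq_one : ∀ {P : Prop}, ind P = 1 → P := by
    intro P hP
    by_contra hc
    rw [ind_eq_zero hc] at hP
    norm_num at hP
  have ind_ite : ∀ (P : Prop) (inst : Decidable P), ind P = @ite ℝ P inst 1 0 := by
    intro P inst
    by_cases hP : P
    · rw [ind_eq_one hP, if_pos hP]
    · rw [ind_eq_zero hP, if_neg hP]
  have hWp : ∀ t C, W t C = ind (C.1 (jT t) = iT t) := by
    intro t C
    rw [hW t C]
    by_cases hc : C.1 (jT t) = iT t
    · rw [ind_eq_one ((xj_subset_iff g E hE C (jT t) (iT t)).mpr hc), ind_eq_one hc]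
    · rw [ind_eq_zero (fun hs => hc ((xj_subset_iff g E hE C (jT t) (iT t)).mp hs)),
        ind_eq_zero hc]
  have hVp : ∀ t C, V t C = ind (C.1 (kT t) = iT t) := by
    intro t C
    rw [hV t C]
    by_cases hc : C.1 (kT t) = iT t
    · rw [ind_eq_one ((xj_subset_iff g E hE C (kT t) (iT t)).mpr hc), ind_eq_one hc]
    · rw [ind_eq_zero (fun hs => hc ((xj_subset_iff g E hE C (kT t) (iT t)).mp hs)),
        ind_eq_zero hc]
  have H1 : ∀ i : Fin n,
      (⋃ C : {C : Fin (n + 1) → Fin m // IsConfig g E C},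
        ⋃ (_ : C.1 (jT (σ i)) = iT (σ i)), xzero g E C.1)
      = ((ghat g (jT (σ i)))⁻¹ * ghat g (kT (σ i))) •
        ⋃ C : {C : Fin (n + 1) → Fin m // IsConfig g E C},
          ⋃ (_ : C.1 (kT (σ i)) = iT (σ i)), xzero g E C.1 := by
    intro i
    have key : ∀ (j : Fin (n+1)),
        (⋃ C : {C : Fin (n + 1) → Fin m // IsConfig g E C},
          ⋃ (_ : C.1 j = iT (σ i)), xzero g E C.1) = (ghat g j)⁻¹ • E (iT (σ i)) := by
      intro j
      symm
      rw [E_eq_iUnion g E hE j (iT (σ i)), Set.smul_set_iUnion]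
      apply Set.iUnion_congr
      intro C
      rw [Set.smul_set_iUnion]
      apply Set.iUnion_congr
      intro hC
      rw [inv_smul_smul]
    rw [key (jT (σ i)), key (kT (σ i)), mul_smul, smul_inv_smul]
  have H2 : ∀ (i : Fin n) (C : {C : Fin (n + 1) → Fin m // IsConfig g E C})
      (hi : (i : ℕ) + 1 < n),
      C.1 (kT (σ ⟨(i : ℕ) + 1, hi⟩)) = iT (σ ⟨(i : ℕ) + 1, hi⟩) →
      C.1 (jT (σ i)) = iT (σ i) := by
    intro i C hi hv
    have hr := hrows i hi C
    have e1 : (permMat σ * W) i C = W (σ i) C := by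
      rw [Matrix.mul_apply]
      rw [Finset.sum_eq_single (σ i)]
      · simp [permMat]
      · intro b _ hb
        rw [show permMat σ i b = 0 from if_neg (fun h => hb h.symm), zero_mul]
      · intro hmem
        exact absurd (Finset.mem_univ _) hmem
    have e2 : (shiftRows (permMat σ) * V) i C = V (σ (cycSucc i)) C := by
      rw [Matrix.mul_apply]
      rw [Finset.sum_eq_single (σ (cycSucc i))]
      · simp [shiftRows, permMat]
      · intro b _ hb
        rw [show shiftRows (permMat σ) i b = 0 from if_neg (fun h => hb h.symm), zero_mul]
      · intro hmem
        exact absurd (Finset.mem_univ _) hmem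
    rw [Matrix.sub_apply, e1, e2] at hr
    have hcyc : cycSucc i = ⟨(i : ℕ) + 1, hi⟩ := Fin.ext (Nat.mod_eq_of_lt hi)
    rw [hcyc, hVp, hWp, ind_eq_one hv] at hr
    by_cases hw : C.1 (jT (σ i)) = iT (σ i)
    · exact hw
    · rw [ind_eq_zero hw] at hr
      norm_num at hr
  have H3 : ∀ C : {C : Fin (n + 1) → Fin m // IsConfig g E C},
      Nat.card {i : Fin n // C.1 (jT (σ i)) = iT (σ i)}
      = Nat.card {i : Fin n // C.1 (kT (σ i)) = iT (σ i)} + 1 := by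
    intro C
    have hs := hsum C
    rw [← Equiv.sum_comp σ (fun t => W t C - V t C)] at hs
    have hre : ∀ i : Fin n, W (σ i) C - V (σ i) C
        = (if C.1 (jT (σ i)) = iT (σ i) then (1:ℝ) else 0)
          - (if C.1 (kT (σ i)) = iT (σ i) then (1:ℝ) else 0) := by
      intro i
      rw [hWp, hVp, ind_ite _ _, ind_ite _ _]
    rw [Finset.sum_congr rfl (fun i _ => hre i), Finset.sum_sub_distrib,
      Finset.sum_boole, Finset.sum_boole] at hs
    rw [Nat.card_eq_fintype_card, Nat.card_eq_fintype_card,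
      Fintype.card_subtype, Fintype.card_subtype]
    have h2 : ((Finset.univ.filter (fun i : Fin n => C.1 (jT (σ i)) = iT (σ i))).card : ℝ)
        = ((Finset.univ.filter (fun i : Fin n => C.1 (kT (σ i)) = iT (σ i))).card : ℝ) + 1 := by
      linarith
    exact_mod_cast h2
  have H4 : ∃ C₀ : {C : Fin (n + 1) → Fin m // IsConfig g E C},
      ∀ C, C.1 (kT (σ ⟨0, hn⟩)) = iT (σ ⟨0, hn⟩) ↔ C = C₀ := by
    obtain ⟨hss, hnne⟩ := Nat.card_eq_one_iff_unique.mp hrow1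
    obtain ⟨⟨C₀, hC₀⟩⟩ := hnne
    refine ⟨C₀, fun C => ⟨fun hv => ?_, fun hEq => ?_⟩⟩
    · have h1 : V (σ ⟨0, hn⟩) C = 1 := by
        rw [hVp]
        exact ind_eq_one hv
      exact congrArg Subtype.val
        (Subsingleton.elim (⟨C, h1⟩ : {C // V (σ ⟨0, hn⟩) C = 1}) ⟨C₀, hC₀⟩)
    · rw [hEq]
      have h1 := hC₀
      rw [hVp] at h1
      exact prop_of_ind_eq_one h1
  obtain ⟨C₀, hC₀iff⟩ := H4
  have hupper : IsCompleteParadox G 3 2 :=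
    paradox_of_system (fun C : {C : Fin (n + 1) → Fin m // IsConfig g E C} => xzero g E C.1)
      (fun C C' hne => by
        rw [Set.disjoint_left]
        intro x hx hx'
        exact hne (config_eq g E hE hx hx'))
      (Set.eq_univ_iff_forall.mpr fun x => Set.mem_iUnion.mpr (exists_mem_xzero g E hE x))
      hn
      (fun i C => C.1 (jT (σ i)) = iT (σ i))
      (fun i C => C.1 (kT (σ i)) = iT (σ i))
      (fun i => (ghat g (jT (σ i)))⁻¹ * ghat g (kT (σ i)))
      H1 H2 H3 C₀ hC₀iff hcard3
  have hmem5 : (5 : ℕ∞) ∈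
      {N : ℕ∞ | ∃ p q : ℕ, N = ((p + q : ℕ) : ℕ∞) ∧ IsCompleteParadox G p q} :=
    ⟨3, 2, by norm_num, hupper⟩
  unfold tarskiNumber
  apply le_antisymm
  · exact sInf_le hmem5
  · apply le_sInf
    rintro N ⟨p, q, rfl, hpq⟩
    have hp2 : 2 ≤ p := paradox_two_le hpq
    have hq2 : 2 ≤ q := paradox_two_le (paradox_swap hpq)
    by_contra hlt
    push_neg at hlt
    have hpq5 : p + q < 5 := by
      have h5 : ((p + q : ℕ) : ℕ∞) < ((5 : ℕ) : ℕ∞) := by exact_mod_cast hlt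
      exact_mod_cast h5
    have hp : p = 2 := by omega
    have hq : q = 2 := by omega
    subst hp
    subst hq
    exact hfree (free_of_paradox22 hpq)


end PaperStmt
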